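/- For every n ∈ ℕ and every tuple (k_1,...,k_n) ∈ ℕ₀^n with ∑_{ℓ=1}^n ℓ·k_ℓ = n, one has ∏_{ℓ=1}^n ℓ^{ℓ·k_ℓ} ≤ (n^n / n!) · ∏_{ℓ=1}^n (ℓ!)^{k_ℓ}. -/

import Mathlib

lemma pair_ineq (a b : ℕ) :
    a ^ a * b ^ b * (a + b).factorial ≤ (a + b) ^ (a + b) * (a.factorial * b.factorial) := by
  have hfac : (a + b).factorial = (a + b).choose a * (a.factorial * b.factorial) := by
    have h := Nat.choose_mul_factorial_mul_factorial (Nat.le_add_right a b)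
    simp only [Nat.add_sub_cancel_left] at h
    rw [← h]; ring
  have hbin : (a + b).choose a * (a ^ a * b ^ b) ≤ (a + b) ^ (a + b) := by
    rw [add_pow]
    calc (a + b).choose a * (a ^ a * b ^ b)
        = a ^ a * b ^ ((a + b) - a) * (a + b).choose a := by
          rw [Nat.add_sub_cancel_left]; ring
      _ ≤ _ := Finset.single_le_sum
          (f := fun i => a ^ i * b ^ ((a + b) - i) * (a + b).choose i)
          (fun i _ => Nat.zero_le _) (by simp [Finset.mem_range])
  calc a ^ a * b ^ b * (a + b).factorial
      = ((a + b).choose a * (a ^ a * b ^ b)) * (a.factorial * b.factorial) := by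
        rw [hfac]; ring
    _ ≤ (a + b) ^ (a + b) * (a.factorial * b.factorial) :=
        Nat.mul_le_mul_right _ hbin

lemma aux_ineq {ι : Type*} (s : Finset ι) (m : ι → ℕ) :
    (∏ i ∈ s, (m i) ^ (m i)) * (∑ i ∈ s, m i).factorial ≤
      (∑ i ∈ s, m i) ^ (∑ i ∈ s, m i) * ∏ i ∈ s, (m i).factorial := by
  induction s using Finset.cons_induction with
  | empty => simp
  | cons i t hi ih =>
    simp only [Finset.prod_cons, Finset.sum_cons]
    set a := m i
    set S := ∑ j ∈ t, m j with hS
    set P := ∏ j ∈ t, (m j) ^ (m j) with hP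
    set Q := ∏ j ∈ t, (m j).factorial with hQ
    have hpos : 0 < S.factorial := Nat.factorial_pos _
    apply Nat.le_of_mul_le_mul_right _ hpos
    calc (a ^ a * P * (a + S).factorial) * S.factorial
        = (P * S.factorial) * (a ^ a * (a + S).factorial) := by ring
      _ ≤ (S ^ S * Q) * (a ^ a * (a + S).factorial) := Nat.mul_le_mul_right _ ih
      _ = (a ^ a * S ^ S * (a + S).factorial) * Q := by ring
      _ ≤ ((a + S) ^ (a + S) * (a.factorial * S.factorial)) * Q :=
          Nat.mul_le_mul_right _ (pair_ineq a S)
      _ = ((a + S) ^ (a + S) * (a.factorial * Q)) * S.factorial := by ring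

theorem stmt_0 (n : ℕ) (k : ℕ → ℕ)
    (hk : ∑ ℓ ∈ Finset.Icc 1 n, ℓ * k ℓ = n) :
    (∏ ℓ ∈ Finset.Icc 1 n, ℓ ^ (ℓ * k ℓ)) * n.factorial ≤
      n ^ n * ∏ ℓ ∈ Finset.Icc 1 n, (ℓ.factorial) ^ (k ℓ) := by
  have h := aux_ineq ((Finset.Icc 1 n).sigma fun ℓ => Finset.range (k ℓ)) (fun p => p.1)
  rw [Finset.sum_sigma, Finset.prod_sigma, Finset.prod_sigma] at h
  simp only [Finset.sum_const, Finset.prod_const, Finset.card_range, smul_eq_mul] at h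
  have hs : ∑ ℓ ∈ Finset.Icc 1 n, k ℓ * ℓ = n := by
    rw [show (∑ ℓ ∈ Finset.Icc 1 n, k ℓ * ℓ) = ∑ ℓ ∈ Finset.Icc 1 n, ℓ * k ℓ from
      Finset.sum_congr rfl fun ℓ _ => mul_comm _ _, hk]
  rw [hs] at h
  calc (∏ ℓ ∈ Finset.Icc 1 n, ℓ ^ (ℓ * k ℓ)) * n.factorial
      = (∏ ℓ ∈ Finset.Icc 1 n, (ℓ ^ ℓ) ^ (k ℓ)) * n.factorial := by
        congr 1; exact Finset.prod_congr rfl fun ℓ _ => by rw [← pow_mul]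
    _ ≤ n ^ n * ∏ ℓ ∈ Finset.Icc 1 n, (ℓ.factorial) ^ (k ℓ) := h
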